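/- Every distance-hereditary graph with at least two vertices contains either a leaf (a vertex of degree 1) or a twin pair (two true twins or two false twins). -/

import Mathlib

open SimpleGraph

/-- The zero forcing closure: `ZFClosure G S v` means vertex `v` eventually becomes blue
when starting from the blue set `S` and repeatedly applying the color-change rule:
a blue vertex with exactly one white neighbor forces that neighbor to become blue. -/
inductive ZFClosure {V : Type*} (G : SimpleGraph V) (S : Set V) : V → Prop
  | init {v : V} : v ∈ S → ZFClosure G S v
  | force {u w : V} : ZFClosure G S u → G.Adj u w →
      (∀ x, G.Adj u x → x ≠ w → ZFClosure G S x) → ZFClosure G S w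

/-- `S` is a zero forcing set of `G` if its closure is all of `V`. -/
def IsZeroForcing {V : Type*} (G : SimpleGraph V) (S : Set V) : Prop :=
  ∀ v, ZFClosure G S v

/-- `z(G;k)`: the number of zero forcing sets of size `k`. -/
noncomputable def zfCount {V : Type*} (G : SimpleGraph V) [Fintype V] (k : ℕ) : ℕ :=
  Nat.card {S : Finset V // S.card = k ∧ IsZeroForcing G ↑S}

/-- `z'(G;k)`: the number of non-forcing `k`-subsets. -/
noncomputable def nfCount {V : Type*} (G : SimpleGraph V) [Fintype V] (k : ℕ) : ℕ :=
  Nat.card {S : Finset V // S.card = k ∧ ¬ IsZeroForcing G ↑S}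

/-- A fort: every vertex outside `F` has `0` or at least `2` neighbors in `F`. -/
def IsFort {V : Type*} (G : SimpleGraph V) (F : Set V) : Prop :=
  ∀ v ∉ F, (∀ w ∈ F, ¬ G.Adj v w) ∨
    ∃ w₁ ∈ F, ∃ w₂ ∈ F, w₁ ≠ w₂ ∧ G.Adj v w₁ ∧ G.Adj v w₂

/-- True twins: adjacent with the same neighbors outside the pair. -/
def TrueTwins {V : Type*} (G : SimpleGraph V) (u v : V) : Prop :=
  G.Adj u v ∧ ∀ w, w ≠ u → w ≠ v → (G.Adj u w ↔ G.Adj v w)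

/-- False twins: distinct, nonadjacent, with the same open neighborhoods. -/
def FalseTwins {V : Type*} (G : SimpleGraph V) (u v : V) : Prop :=
  u ≠ v ∧ ¬ G.Adj u v ∧ ∀ w, G.Adj u w ↔ G.Adj v w

/-- A twin pair: true twins or false twins. -/
def TwinPair {V : Type*} (G : SimpleGraph V) (u v : V) : Prop :=
  TrueTwins G u v ∨ FalseTwins G u v

/-- `G` is path-extremal: the path on the same number of vertices has
coefficientwise at least as many zero forcing sets of every size. -/
noncomputable def PathExtremal {V : Type*} (G : SimpleGraph V) [Fintype V] : Prop :=
  ∀ k : ℕ, zfCount G k ≤ zfCount (SimpleGraph.pathGraph (Fintype.card V)) k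

/-- `BuildDH G A`: the set `A` can be built up from a single vertex by pendant additions,
false-twin additions, and true-twin additions, with respect to the induced subgraph on `A`. -/
inductive BuildDH {V : Type*} (G : SimpleGraph V) : Set V → Prop
  | single (v : V) : BuildDH G {v}
  | pendant {A : Set V} (u v : V) : BuildDH G A → v ∈ A → u ∉ A →
      (∀ w ∈ A, G.Adj u w ↔ w = v) → BuildDH G (insert u A)
  | falseTwin {A : Set V} (u v : V) : BuildDH G A → v ∈ A → u ∉ A →
      ¬ G.Adj u v → (∀ w ∈ A, G.Adj u w ↔ G.Adj v w) → BuildDH G (insert u A)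
  | trueTwin {A : Set V} (u v : V) : BuildDH G A → v ∈ A → u ∉ A →
      G.Adj u v → (∀ w ∈ A, w ≠ v → (G.Adj u w ↔ G.Adj v w)) → BuildDH G (insert u A)

/-- A graph is distance-hereditary if it can be obtained from `K₁` by pendant,
false-twin, and true-twin additions. -/
def DistanceHereditary {V : Type*} (G : SimpleGraph V) : Prop :=
  BuildDH G Set.univ

/-- Every distance-hereditary graph with at least two vertices contains a leaf
or a twin pair. -/
theorem stmt_7 {V : Type*} [Fintype V] (G : SimpleGraph V)
    (hdh : DistanceHereditary G) (h2 : 2 ≤ Fintype.card V) :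
    (∃ x v : V, G.Adj x v ∧ ∀ w, G.Adj x w → w = v) ∨
    (∃ u v : V, TwinPair G u v) := by
  have h := hdh
  unfold DistanceHereditary at h
  generalize hU : (Set.univ : Set V) = U at h
  cases h with
  | single v =>
    exfalso
    have hall : ∀ x : V, x = v := fun x => by
      have : x ∈ ({v} : Set V) := hU ▸ Set.mem_univ x
      simpa using this
    have := Fintype.card_le_one_iff.mpr (fun a b => (hall a).trans (hall b).symm)
    omega
  | @pendant A u v hA hv hu hadj =>
    left
    refine ⟨u, v, (hadj v hv).mpr rfl, fun w hw => ?_⟩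
    have hwA : w ∈ A := by
      have hmem : w ∈ insert u A := hU ▸ Set.mem_univ w
      rcases hmem with h1 | h2
      · exact absurd (h1 ▸ hw) (G.loopless.irrefl u)
      · exact h2
    exact (hadj w hwA).mp hw
  | @falseTwin A u v hA hv hu hna hadj =>
    right
    refine ⟨u, v, Or.inr ⟨fun h => hu (h ▸ hv), hna, fun w => ?_⟩⟩
    have hmem : w ∈ insert u A := hU ▸ Set.mem_univ w
    rcases hmem with h1 | h2
    · subst h1
      exact iff_of_false (G.loopless.irrefl w) (fun h => hna h.symm)
    · exact hadj w h2
  | @trueTwin A u v hA hv hu ha hadj =>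
    right
    refine ⟨u, v, Or.inl ⟨ha, fun w hwu hwv => ?_⟩⟩
    have hmem : w ∈ insert u A := hU ▸ Set.mem_univ w
    rcases hmem with h1 | h2
    · exact absurd h1 hwu
    · exact hadj w h2 hwv
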